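/- Let L be a Leibniz algebra, I the ideal spanned by {[ab]+[ba] : a,b ∈ L}, and L̄ = L/I the quotient Lie algebra, writing ū = u + I. On L̂ = L̄ ⊕ L define [u,v] = 0 for u,v ∈ L, [ū,v] = [uv], [u,v̄] = −[vu], and [ū,v̄] = [uv]‾. Then L̂ with this bracket is a Lie algebra. -/
import Mathlib


variable {k L : Type*} [Field k] [AddCommGroup L] [Module k L]

/-- The subspace of a Leibniz algebra `L` spanned by all elements `[ab] + [ba]`. -/
def leibSpan (br : L →ₗ[k] L →ₗ[k] L) : Submodule k L :=
  Submodule.span k {x | ∃ a b : L, x = br a b + br b a}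

/-- The bracket on `L̂ = L̄ ⊕ L` (with `L̄ = L/I`): for `p = (x₁, u₁)`, `q = (x₂, u₂)`,
`[p, q] = ([x₁, x₂], x₁ · u₂ − x₂ · u₁)`, which encodes `[u,v] = 0`, `[ū,v] = [uv]`,
`[u,v̄] = −[vu]`, `[ū,v̄] = [uv]‾`. -/
def hatBracket (br : L →ₗ[k] L →ₗ[k] L)
    (qbr : (L ⧸ leibSpan br) →ₗ[k] (L ⧸ leibSpan br) →ₗ[k] (L ⧸ leibSpan br))
    (act : (L ⧸ leibSpan br) →ₗ[k] L →ₗ[k] L)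
    (p q : (L ⧸ leibSpan br) × L) : (L ⧸ leibSpan br) × L :=
  (qbr p.1 q.1, act p.1 q.2 - act q.1 p.2)

/-- Let `L` be a Leibniz algebra, `I` the ideal spanned by `{[ab]+[ba]}`, `L̄ = L/I` the
quotient Lie algebra with induced bracket `qbr`, and let `act` be the induced action
`[ū, v] = [uv]` of `L̄` on `L`. Then `L̂ = L̄ ⊕ L` with the bracket `hatBracket` is a
Lie algebra: the bracket is antisymmetric and satisfies the Jacobi identity. -/
theorem stmt_9 (br : L →ₗ[k] L →ₗ[k] L)
    (leib : ∀ x y z : L, br x (br y z) - br y (br x z) = br (br x y) z)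
    (qbr : (L ⧸ leibSpan br) →ₗ[k] (L ⧸ leibSpan br) →ₗ[k] (L ⧸ leibSpan br))
    (hqbr : ∀ a b : L, qbr (Submodule.Quotient.mk a) (Submodule.Quotient.mk b)
      = Submodule.Quotient.mk (br a b))
    (act : (L ⧸ leibSpan br) →ₗ[k] L →ₗ[k] L)
    (hact : ∀ u v : L, act (Submodule.Quotient.mk u) v = br u v) :
    (∀ p q : (L ⧸ leibSpan br) × L,
      hatBracket br qbr act p q = - hatBracket br qbr act q p) ∧
    (∀ p q r : (L ⧸ leibSpan br) × L,
      hatBracket br qbr act (hatBracket br qbr act p q) r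
        + hatBracket br qbr act (hatBracket br qbr act q r) p
        + hatBracket br qbr act (hatBracket br qbr act r p) q = 0) := by
  classical
  -- antisymmetry of qbr
  have qA : ∀ x y : L ⧸ leibSpan br, qbr x y = - qbr y x := by
    intro x y
    obtain ⟨a, rfl⟩ := Submodule.Quotient.mk_surjective _ x
    obtain ⟨b, rfl⟩ := Submodule.Quotient.mk_surjective _ y
    rw [hqbr, hqbr, eq_neg_iff_add_eq_zero, ← Submodule.Quotient.mk_add,
      Submodule.Quotient.mk_eq_zero]
    exact Submodule.subset_span ⟨a, b, rfl⟩
  -- Leibniz identity on the quotient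
  have qL : ∀ x y z : L ⧸ leibSpan br,
      qbr x (qbr y z) - qbr y (qbr x z) = qbr (qbr x y) z := by
    intro x y z
    obtain ⟨a, rfl⟩ := Submodule.Quotient.mk_surjective _ x
    obtain ⟨b, rfl⟩ := Submodule.Quotient.mk_surjective _ y
    obtain ⟨c, rfl⟩ := Submodule.Quotient.mk_surjective _ z
    rw [hqbr b c, hqbr a (br b c), hqbr a c, hqbr b (br a c), hqbr a b,
      hqbr (br a b) c, ← Submodule.Quotient.mk_sub, leib]
  -- derivation property of act
  have aL : ∀ (x y : L ⧸ leibSpan br) (u : L),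
      act (qbr x y) u = act x (act y u) - act y (act x u) := by
    intro x y u
    obtain ⟨a, rfl⟩ := Submodule.Quotient.mk_surjective _ x
    obtain ⟨b, rfl⟩ := Submodule.Quotient.mk_surjective _ y
    rw [hqbr, hact, hact, hact, hact, hact, leib]
  constructor
  · rintro ⟨x1, u1⟩ ⟨x2, u2⟩
    simp only [hatBracket, Prod.neg_mk, Prod.mk.injEq]
    exact ⟨qA x1 x2, by abel⟩
  · rintro ⟨x1, u1⟩ ⟨x2, u2⟩ ⟨x3, u3⟩
    simp only [hatBracket, Prod.mk_add_mk, Prod.mk_eq_zero]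
    constructor
    · have h1 := qL x1 x2 x3
      have h2 := qA (qbr x2 x3) x1
      have h3 := qA (qbr x3 x1) x2
      have h4 := qA x3 x1
      rw [h2, h3, h4, map_neg, ← h1]
      abel
    · simp only [map_sub, aL]
      abel
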